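/- Let X and Y be set-valued mappings whose conditional cores with respect to a sub-σ-algebra H exist. Then m(X|H) + m(Y|H) ⊆ m(X+Y|H) almost surely (subadditivity of the conditional core for reverse inclusion). Moreover, if η is an H-measurable random element and X is a random closed set, then m(X + {η} | H) = m(X|H) + η almost surely. -/

import Mathlib

open MeasureTheory Pointwise
open scoped ENNReal NNReal

section Aux
open Set Filter Topology
open scoped ENNReal NNReal

noncomputable section

/-- the Baire space -/
abbrev NNaux : Type := ℕ → ℕ

lemma aux_capa {K : Type*} [TopologicalSpace K] [MeasurableSpace K] [OpensMeasurableSpace K]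
    [T2Space K] [FirstCountableTopology K]
    (μ : Measure K) [IsFiniteMeasure μ] (f : NNaux → K) (hf : Continuous f)
    {ε : ℝ≥0∞} (hε : 0 < ε) :
    ∃ L : Set NNaux, IsCompact L ∧ μ (Set.range f) ≤ μ (f '' L) + ε := by
  obtain ⟨δ, δpos, hδ⟩ := ENNReal.exists_pos_sum_of_countable hε.ne' ℕ
  -- the one-step choice
  have hstep : ∀ (A : Set NNaux) (n : ℕ),
      ∃ t : ℕ, μ (f '' A) ≤ μ (f '' (A ∩ {x | x n ≤ t})) + δ n := by
    intro A n
    have hmono : Monotone (fun t : ℕ => f '' (A ∩ {x | x n ≤ t})) := by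
      intro a b hab
      exact image_mono (inter_subset_inter_right _ (fun x hx => le_trans hx hab))
    have hun : (⋃ t : ℕ, f '' (A ∩ {x | x n ≤ t})) = f '' A := by
      have huA : (⋃ t : ℕ, (A ∩ {x | x n ≤ t})) = A := by
        ext x
        simp only [mem_iUnion, mem_inter_iff, mem_setOf_eq]
        exact ⟨fun ⟨t, ht, _⟩ => ht, fun hx => ⟨x n, hx, le_rfl⟩⟩
      rw [← image_iUnion, huA]
    have h1 : μ (f '' A) = ⨆ t, μ (f '' (A ∩ {x | x n ≤ t})) := by
      rw [← hun, hmono.measure_iUnion]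
    rcases le_or_gt (μ (f '' A)) (δ n) with h | h
    · exact ⟨0, h.trans (le_add_self)⟩
    · have hne : (δ n : ℝ≥0∞) ≠ 0 := by exact_mod_cast (δpos n).ne'
      have h2 : μ (f '' A) - δ n < μ (f '' A) :=
        ENNReal.sub_lt_self (measure_ne_top μ _) (pos_of_gt h).ne' hne
      rw [h1] at h2
      rw [lt_iSup_iff] at h2
      obtain ⟨t, ht⟩ := h2
      rw [← h1] at ht
      exact ⟨t, tsub_le_iff_right.mp ht.le⟩
  choose step hstep' using hstep
  set M : (ℕ → ℕ) → ℕ → Set NNaux := fun σ n => {x | ∀ i < n, x i ≤ σ i} with hM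
  set s : ℕ → (ℕ → ℕ) := fun n =>
    Nat.rec (fun _ => 0) (fun n sn => Function.update sn n (step (M sn n) n)) n with hs
  set σ : ℕ → ℕ := fun n => s (n + 1) n with hσ
  have hagree : ∀ n i, i < n → s n i = σ i := by
    intro n
    induction n with
    | zero => intro i hi; omega
    | succ n ih =>
      intro i hi
      rcases Nat.lt_succ_iff_lt_or_eq.mp hi with h | h
      · have : s (n + 1) i = s n i := by
          show Function.update (s n) n (step (M (s n) n) n) i = s n i
          exact Function.update_of_ne (by omega) _ _
        rw [this, ih i h]
      · subst h; rfl
  have hMs : ∀ n, M (s n) n = M σ n := by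
    intro n; ext x
    simp only [hM, mem_setOf_eq]
    exact ⟨fun h i hi => (hagree n i hi) ▸ h i hi, fun h i hi => (hagree n i hi).symm ▸ h i hi⟩
  have hMsucc : ∀ n, M σ (n + 1) = M σ n ∩ {x | x n ≤ step (M (s n) n) n} := by
    intro n; ext x
    simp only [hM, mem_setOf_eq, mem_inter_iff]
    constructor
    · intro h
      refine ⟨fun i hi => h i (by omega), ?_⟩
      have hx := h n (by omega)
      have : σ n = step (M (s n) n) n := by
        show s (n + 1) n = _
        exact Function.update_self _ _ _
      rwa [this] at hx
    · rintro ⟨h1, h2⟩ i hi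
      rcases Nat.lt_succ_iff_lt_or_eq.mp hi with h | h
      · exact h1 i h
      · subst h
        have : σ i = step (M (s i) i) i := Function.update_self _ _ _
        rwa [this]
  have key : ∀ n, μ (f '' M σ n) ≤ μ (f '' M σ (n + 1)) + δ n := by
    intro n
    rw [hMsucc n, ← hMs n]
    exact hstep' (M (s n) n) n
  have cum : ∀ n, μ (Set.range f) ≤ μ (f '' M σ n) + ∑ i ∈ Finset.range n, (δ i : ℝ≥0∞) := by
    intro n
    induction n with
    | zero =>
      simp only [Finset.range_zero, Finset.sum_empty, add_zero]
      have : M σ 0 = univ := by ext x; simp [hM]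
      rw [this, image_univ]
    | succ n ih =>
      calc μ (Set.range f) ≤ μ (f '' M σ n) + ∑ i ∈ Finset.range n, (δ i : ℝ≥0∞) := ih
        _ ≤ (μ (f '' M σ (n + 1)) + δ n) + ∑ i ∈ Finset.range n, (δ i : ℝ≥0∞) :=
            add_le_add_left (key n) _
        _ = μ (f '' M σ (n + 1)) + ∑ i ∈ Finset.range (n + 1), (δ i : ℝ≥0∞) := by
            rw [Finset.sum_range_succ]; ring
  have cum' : ∀ n, μ (Set.range f) ≤ μ (closure (f '' M σ n)) + ε := by
    intro n
    refine (cum n).trans (add_le_add (measure_mono subset_closure) ?_)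
    exact (ENNReal.sum_le_tsum _).trans hδ.le
  set L : Set NNaux := univ.pi fun i => Iic (σ i) with hL
  have hLc : IsCompact L := isCompact_univ_pi fun i => (Set.finite_Iic (σ i)).isCompact
  have hMclosed : ∀ m, IsClosed (M σ m) := by
    intro m
    have : M σ m = ⋂ i ∈ Finset.range m, (fun x : NNaux => x i) ⁻¹' Iic (σ i) := by
      ext x; simp [hM]
    rw [this]
    exact isClosed_biInter fun i _ => isClosed_Iic.preimage (continuous_apply i)
  have hincl : (⋂ n, closure (f '' M σ n)) ⊆ f '' L := by
    intro k hk
    obtain ⟨u, hu⟩ := (𝓝 k).exists_antitone_basis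
    have hx : ∀ n, ∃ x, x ∈ M σ n ∧ f x ∈ u n := by
      intro n
      have hk' : k ∈ closure (f '' M σ n) := mem_iInter.1 hk n
      have hun : u n ∈ 𝓝 k := hu.toHasBasis.mem_of_mem trivial
      rcases mem_closure_iff_nhds.1 hk' _ hun with ⟨y, hy1, hy2⟩
      obtain ⟨x, hxM, hxy⟩ := hy2
      exact ⟨x, hxM, by rw [hxy]; exact hy1⟩
    choose x hxM hxu using hx
    set b : ℕ → ℕ := fun i => max (σ i) (Finset.sup (Finset.range (i + 1)) fun m => x m i) with hb
    have hxA : ∀ n, x n ∈ univ.pi fun i => Iic (b i) := by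
      intro n
      intro i _
      simp only [mem_Iic, hb]
      rcases lt_or_ge i n with h | h
      · exact le_max_of_le_left (hxM n i h)
      · exact le_max_of_le_right
          (Finset.le_sup (f := fun m => x m i) (Finset.mem_range.2 (Nat.lt_succ_of_le h)))
    obtain ⟨y, hyA, ψ, hψ, hty⟩ :=
      (isCompact_univ_pi fun i => (Set.finite_Iic (b i)).isCompact).tendsto_subseq hxA
    have hyM : ∀ m, y ∈ M σ m := by
      intro m
      refine (hMclosed m).mem_of_tendsto hty ?_
      filter_upwards [eventually_ge_atTop m] with j hj
      intro i hi
      exact hxM (ψ j) i (lt_of_lt_of_le hi (hj.trans (hψ.le_apply)))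
    have hyL : y ∈ L := by
      intro i _
      exact hyM (i + 1) i (by omega)
    have h1 : Tendsto (fun j => f (x (ψ j))) atTop (𝓝 k) :=
      (hu.tendsto hxu).comp (hψ.tendsto_atTop)
    have h2 : Tendsto (fun j => f (x (ψ j))) atTop (𝓝 (f y)) :=
      (hf.tendsto y).comp hty
    exact ⟨y, hyL, tendsto_nhds_unique h2 h1⟩
  have hdir : Directed (fun a b : Set K => a ⊇ b) (fun n => closure (f '' M σ n)) := by
    have hanti : Antitone (fun n => closure (f '' M σ n)) := by
      intro a b hab
      exact closure_mono (image_mono (fun x hx i hi => hx i (lt_of_lt_of_le hi hab)))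
    exact hanti.directed_ge
  have hC : μ (⋂ n, closure (f '' M σ n)) = ⨅ n, μ (closure (f '' M σ n)) :=
    Directed.measure_iInter (fun n => isClosed_closure.measurableSet.nullMeasurableSet)
      hdir ⟨0, measure_ne_top μ _⟩
  refine ⟨L, hLc, ?_⟩
  have : μ (Set.range f) ≤ (⨅ n, μ (closure (f '' M σ n))) + ε := by
    rw [ENNReal.iInf_add]
    exact le_iInf fun n => cum' n
  refine this.trans (add_le_add_left ?_ ε)
  rw [← hC]
  exact measure_mono hincl

lemma prod_mono_left' {Ω X : Type*} {m₁ m₂ : MeasurableSpace Ω} (mX : MeasurableSpace X)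
    (h : m₁ ≤ m₂) : m₁.prod mX ≤ m₂.prod mX :=
  sup_le_sup (MeasurableSpace.comap_mono h) le_rfl

lemma aux_good {Ω X : Type*} (mX : MeasurableSpace X) (mH : MeasurableSpace Ω)
    {S : Set (Ω × X)} (hS : MeasurableSet[mH.prod mX] S) :
    ∃ m₀ : MeasurableSpace Ω, m₀ ≤ mH ∧
      (∃ b : Set (Set Ω), b.Countable ∧ m₀ = MeasurableSpace.generateFrom b) ∧
      MeasurableSet[m₀.prod mX] S := by
  set P : Set (Ω × X) → Prop := fun S =>
    ∃ m₀ : MeasurableSpace Ω, m₀ ≤ mH ∧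
      (∃ b : Set (Set Ω), b.Countable ∧ m₀ = MeasurableSpace.generateFrom b) ∧
      MeasurableSet[m₀.prod mX] S with hP
  have hbot : (⊥ : MeasurableSpace Ω) = MeasurableSpace.generateFrom ∅ :=
    le_antisymm bot_le (MeasurableSpace.generateFrom_le (by simp))
  set m' : MeasurableSpace (Ω × X) :=
    { MeasurableSet' := P
      measurableSet_empty := ⟨⊥, bot_le, ⟨∅, countable_empty, hbot⟩,
        @MeasurableSet.empty _ ((⊥ : MeasurableSpace Ω).prod mX)⟩
      measurableSet_compl := by
        rintro s ⟨m₀, hle, hgen, hm⟩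
        exact ⟨m₀, hle, hgen, hm.compl⟩
      measurableSet_iUnion := by
        intro g hg
        choose m₀ hle hgen hmeas using hg
        choose b hbc hbgen using hgen
        refine ⟨⨆ n, m₀ n, iSup_le hle, ⟨⋃ n, b n, countable_iUnion hbc, ?_⟩, ?_⟩
        · apply le_antisymm
          · exact iSup_le fun n => (hbgen n).le.trans
              (MeasurableSpace.generateFrom_mono (subset_iUnion b n))
          · refine MeasurableSpace.generateFrom_le fun t ht => ?_
            obtain ⟨n, htn⟩ := mem_iUnion.1 ht
            exact (le_iSup m₀ n) _ ((hbgen n) ▸ MeasurableSpace.measurableSet_generateFrom htn)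
        · exact MeasurableSet.iUnion fun n =>
            prod_mono_left' mX (le_iSup m₀ n) _ (hmeas n) } with hm'
  have hle : mH.prod mX ≤ m' := by
    refine sup_le ?_ ?_
    · rintro s ⟨A, hA, rfl⟩
      refine ⟨MeasurableSpace.generateFrom {A},
        MeasurableSpace.generateFrom_le (by simpa using hA),
        ⟨{A}, countable_singleton A, rfl⟩, ?_⟩
      exact @measurable_fst Ω X (MeasurableSpace.generateFrom {A}) mX A
        (MeasurableSpace.measurableSet_generateFrom rfl)
    · rintro s ⟨B, hB, rfl⟩
      exact ⟨⊥, bot_le, ⟨∅, countable_empty, hbot⟩, @measurable_snd Ω X ⊥ mX B hB⟩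
  exact hle S hS

lemma aux_factor {Ω X : Type*} (mX : MeasurableSpace X) (mH : MeasurableSpace Ω)
    (S1 S2 S3 : Set (Ω × X)) (h1 : MeasurableSet[mH.prod mX] S1)
    (h2 : MeasurableSet[mH.prod mX] S2) (h3 : MeasurableSet[mH.prod mX] S3) :
    ∃ φ : Ω → NNaux, Measurable[mH] φ ∧
      ∃ G1 G2 G3 : Set (NNaux × X),
        MeasurableSet[(inferInstance : MeasurableSpace NNaux).prod mX] G1 ∧
        MeasurableSet[(inferInstance : MeasurableSpace NNaux).prod mX] G2 ∧
        MeasurableSet[(inferInstance : MeasurableSpace NNaux).prod mX] G3 ∧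
        S1 = (fun p : Ω × X => (φ p.1, p.2)) ⁻¹' G1 ∧
        S2 = (fun p : Ω × X => (φ p.1, p.2)) ⁻¹' G2 ∧
        S3 = (fun p : Ω × X => (φ p.1, p.2)) ⁻¹' G3 := by
  classical
  obtain ⟨ma, halea, ⟨ba, hbca, hbga⟩, hma⟩ := aux_good mX mH h1
  obtain ⟨mb, haleb, ⟨bb, hbcb, hbgb⟩, hmb⟩ := aux_good mX mH h2
  obtain ⟨mc, halec, ⟨bc', hbcc, hbgc⟩, hmc⟩ := aux_good mX mH h3
  set m₀ : MeasurableSpace Ω := ma ⊔ mb ⊔ mc with hm₀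
  have hm₀H : m₀ ≤ mH := sup_le (sup_le halea haleb) halec
  set b : Set (Set Ω) := insert ∅ (ba ∪ bb ∪ bc') with hb
  have hbc : b.Countable := (countable_insert.2 ((hbca.union hbcb).union hbcc))
  have hbgen : m₀ = MeasurableSpace.generateFrom b := by
    rw [hb, MeasurableSpace.generateFrom_insert_empty]
    rw [hm₀, hbga, hbgb, hbgc]
    apply le_antisymm
    · refine sup_le (sup_le ?_ ?_) ?_ <;>
        exact MeasurableSpace.generateFrom_mono (by intro t ht; simp [ht])
    · refine MeasurableSpace.generateFrom_le fun t ht => ?_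
      rcases ht with (ht | ht) | ht
      · exact (le_sup_left.trans le_sup_left : MeasurableSpace.generateFrom ba ≤ _)
          _ (MeasurableSpace.measurableSet_generateFrom ht)
      · exact (le_sup_right.trans le_sup_left : MeasurableSpace.generateFrom bb ≤ _)
          _ (MeasurableSpace.measurableSet_generateFrom ht)
      · exact (le_sup_right : MeasurableSpace.generateFrom bc' ≤ _)
          _ (MeasurableSpace.measurableSet_generateFrom ht)
  -- enumerate the generators
  have hbne : b.Nonempty := ⟨∅, mem_insert _ _⟩
  obtain ⟨E, hE⟩ := hbc.exists_eq_range hbne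
  -- the map to Baire space
  set φ : Ω → NNaux := fun ω n => if ω ∈ E n then 1 else 0 with hφ
  have hEm : ∀ n, MeasurableSet[m₀] (E n) := by
    intro n
    rw [hbgen]
    exact MeasurableSpace.measurableSet_generateFrom (hE ▸ mem_range_self n)
  have hφm : Measurable[m₀] φ := by
    apply measurable_pi_lambda
    intro n
    exact Measurable.ite (hEm n) measurable_const measurable_const
  have hEpre : ∀ n, E n = φ ⁻¹' {g : NNaux | g n = 1} := by
    intro n
    ext ω
    simp only [hφ, mem_preimage, mem_setOf_eq]
    split_ifs with h <;> simp [h]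
  -- m₀ ≤ comap φ borel
  have hcomap : m₀ ≤ MeasurableSpace.comap φ inferInstance := by
    rw [hbgen]
    refine MeasurableSpace.generateFrom_le fun t ht => ?_
    rw [hE] at ht
    obtain ⟨n, rfl⟩ := ht
    exact ⟨{g : NNaux | g n = 1}, (measurable_pi_apply n) (measurableSet_singleton 1),
      (hEpre n).symm⟩
  have haS1 : MeasurableSet[m₀.prod mX] S1 :=
    prod_mono_left' mX (le_sup_left.trans le_sup_left : ma ≤ m₀) _ hma
  have haS2 : MeasurableSet[m₀.prod mX] S2 :=
    prod_mono_left' mX (le_sup_right.trans le_sup_left : mb ≤ m₀) _ hmb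
  have haS3 : MeasurableSet[m₀.prod mX] S3 :=
    prod_mono_left' mX (le_sup_right : mc ≤ m₀) _ hmc
  clear_value m₀
  -- the product map
  have hprodle : m₀.prod mX ≤
      MeasurableSpace.comap (fun p : Ω × X => (φ p.1, p.2))
        ((inferInstance : MeasurableSpace NNaux).prod mX) := by
    set pm : Ω × X → NNaux × X := fun p => (φ p.1, p.2) with hpm
    refine sup_le ?_ ?_
    · calc MeasurableSpace.comap Prod.fst m₀
          ≤ MeasurableSpace.comap Prod.fst
              (MeasurableSpace.comap φ (inferInstance : MeasurableSpace NNaux)) :=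
            MeasurableSpace.comap_mono hcomap
        _ = MeasurableSpace.comap pm
              (MeasurableSpace.comap Prod.fst (inferInstance : MeasurableSpace NNaux)) := by
            rw [MeasurableSpace.comap_comp, MeasurableSpace.comap_comp]; rfl
        _ ≤ MeasurableSpace.comap pm ((inferInstance : MeasurableSpace NNaux).prod mX) :=
            MeasurableSpace.comap_mono le_sup_left
    · calc MeasurableSpace.comap Prod.snd mX
          = MeasurableSpace.comap pm (MeasurableSpace.comap Prod.snd mX) := by
            rw [MeasurableSpace.comap_comp]; rfl
        _ ≤ MeasurableSpace.comap pm ((inferInstance : MeasurableSpace NNaux).prod mX) :=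
            MeasurableSpace.comap_mono le_sup_right
  have key : ∀ S : Set (Ω × X), MeasurableSet[m₀.prod mX] S →
      ∃ G : Set (NNaux × X), MeasurableSet[(inferInstance : MeasurableSpace NNaux).prod mX] G ∧
        S = (fun p : Ω × X => (φ p.1, p.2)) ⁻¹' G := by
    intro S hS
    obtain ⟨G, hG, hpre⟩ := MeasurableSpace.measurableSet_comap.1 (hprodle S hS)
    exact ⟨G, hG, hpre.symm⟩
  obtain ⟨G1, hG1, e1⟩ := key S1 haS1
  obtain ⟨G2, hG2, e2⟩ := key S2 haS2
  obtain ⟨G3, hG3, e3⟩ := key S3 haS3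
  exact ⟨φ, hφm.mono hm₀H le_rfl, G1, G2, G3, hG1, hG2, hG3, e1, e2, e3⟩

lemma measurable_pairmap {Ω X K : Type*} {mH : MeasurableSpace Ω} {mX : MeasurableSpace X}
    {mK : MeasurableSpace K} {φ : Ω → K} (hφ : Measurable[mH] φ) :
    @Measurable (Ω × X) (K × X) (mH.prod mX) (mK.prod mX) (fun p => (φ p.1, p.2)) := by
  rw [measurable_iff_comap_le, MeasurableSpace.prod, MeasurableSpace.comap_sup,
    MeasurableSpace.comap_comp, MeasurableSpace.comap_comp]
  refine sup_le ?_ ?_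
  · have e1 : (Prod.fst ∘ fun p : Ω × X => (φ p.1, p.2)) = φ ∘ Prod.fst := rfl
    rw [e1, ← MeasurableSpace.comap_comp]
    exact le_trans (MeasurableSpace.comap_mono (measurable_iff_comap_le.1 hφ)) le_sup_left
  · have e2 : (Prod.snd ∘ fun p : Ω × X => (φ p.1, p.2)) = Prod.snd := rfl
    rw [e2]
    exact le_sup_right

end
end Aux

/-- `Z` is the conditional core of the set-valued map `C` with respect to `mH`: the largest
`mH`-measurable random set a.s. contained in `C` (no closedness required). -/
def IsCondCoreGen {Ω X : Type*} [MeasurableSpace X] (mF mH : MeasurableSpace Ω)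
    (P : @MeasureTheory.Measure Ω mF) (C Z : Ω → Set X) : Prop :=
  MeasurableSet[mH.prod (inferInstance : MeasurableSpace X)] {p : Ω × X | p.2 ∈ Z p.1} ∧
  (∀ᵐ ω ∂P, Z ω ⊆ C ω) ∧
  ∀ W : Ω → Set X,
    MeasurableSet[mH.prod (inferInstance : MeasurableSpace X)] {p : Ω × X | p.2 ∈ W p.1} →
    (∀ᵐ ω ∂P, W ω ⊆ C ω) → ∀ᵐ ω ∂P, W ω ⊆ Z ω

/-- Lemma 4.7 and Lemma 4.9: subadditivity of the conditional core,
m(X|H) + m(Y|H) ⊆ m(X+Y|H) a.s., and equality m(X+{η}|H) = m(X|H)+η for an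
H-measurable singleton summand. -/
theorem stmt15 {Ω X : Type*} [mF : MeasurableSpace Ω] [NormedAddCommGroup X]
    [NormedSpace ℝ X] [CompleteSpace X] [TopologicalSpace.SeparableSpace X]
    [MeasurableSpace X] [BorelSpace X]
    (P : Measure Ω) [IsProbabilityMeasure P] (hPc : P.IsComplete)
    (mH : MeasurableSpace Ω) (hH : mH ≤ mF) :
    (∀ CX CY ZX ZY ZS : Ω → Set X,
      IsCondCoreGen mF mH P CX ZX → IsCondCoreGen mF mH P CY ZY →
      IsCondCoreGen mF mH P (fun ω => CX ω + CY ω) ZS →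
      ∀ᵐ ω ∂P, ZX ω + ZY ω ⊆ ZS ω) ∧
    (∀ C : Ω → Set X, (∀ ω, IsClosed (C ω)) →
      MeasurableSet {p : Ω × X | p.2 ∈ C p.1} →
      ∀ η : Ω → X, Measurable[mH] η →
        ∀ Z ZS : Ω → Set X, IsCondCoreGen mF mH P C Z →
          IsCondCoreGen mF mH P (fun ω => C ω + {η ω}) ZS →
          ∀ᵐ ω ∂P, ZS ω = Z ω + {η ω}) := by
  have memadd : ∀ (A : Set X) (a v : X), v ∈ A + {a} ↔ v - a ∈ A := by
    intro A a v
    rw [Set.add_singleton]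
    constructor
    · rintro ⟨x, hx, rfl⟩; simpa using hx
    · intro h; exact ⟨v - a, h, by simp⟩
  constructor
  · -- Part 1 : subadditivity
    intro CX CY ZX ZY ZS hX hY hS
    letI mFinst : MeasurableSpace Ω := mF
    obtain ⟨mGX, hZXsub, -⟩ := hX
    obtain ⟨mGY, hZYsub, -⟩ := hY
    obtain ⟨mGS, hZSsub, hmax⟩ := hS
    obtain ⟨φ, hφ, G1, G2, G3, hG1, hG2, hG3, e1, e2, e3⟩ :=
      aux_factor (inferInstance : MeasurableSpace X) mH _ _ _ mGX mGY mGS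
    have c1 : ∀ ω x, x ∈ ZX ω ↔ (φ ω, x) ∈ G1 := by
      intro ω x
      simpa using Set.ext_iff.1 e1 (ω, x)
    have c2 : ∀ ω x, x ∈ ZY ω ↔ (φ ω, x) ∈ G2 := by
      intro ω x
      simpa using Set.ext_iff.1 e2 (ω, x)
    have c3 : ∀ ω x, x ∈ ZS ω ↔ (φ ω, x) ∈ G3 := by
      intro ω x
      simpa using Set.ext_iff.1 e3 (ω, x)
    have hφF : Measurable φ := fun s hs => hH _ (hφ hs)
    set Btil : Set (NNaux × (X × X)) :=
      {q | (q.1, q.2.1) ∈ G1 ∧ (q.1, q.2.2) ∈ G2 ∧ (q.1, q.2.1 + q.2.2) ∉ G3} with hBtil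
    have hmB : MeasurableSet Btil := by
      have hb : Btil = (fun q : NNaux × (X × X) => (q.1, q.2.1)) ⁻¹' G1 ∩
          ((fun q : NNaux × (X × X) => (q.1, q.2.2)) ⁻¹' G2 ∩
           ((fun q : NNaux × (X × X) => (q.1, q.2.1 + q.2.2)) ⁻¹' G3)ᶜ) := rfl
      rw [hb]
      have m1 : Measurable (fun q : NNaux × (X × X) => (q.1, q.2.1)) :=
        measurable_fst.prodMk measurable_snd.fst
      have m2 : Measurable (fun q : NNaux × (X × X) => (q.1, q.2.2)) :=
        measurable_fst.prodMk measurable_snd.snd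
      have m3 : Measurable (fun q : NNaux × (X × X) => (q.1, q.2.1 + q.2.2)) :=
        measurable_fst.prodMk (measurable_snd.fst.add measurable_snd.snd)
      exact (m1 hG1).inter ((m2 hG2).inter (m3 hG3).compl)
    set Ntil : Set NNaux := Prod.fst '' Btil with hNtil
    set μ : Measure NNaux := P.map φ with hμ
    haveI : IsProbabilityMeasure μ := Measure.isProbabilityMeasure_map hφF.aemeasurable
    have hnull : μ Ntil = 0 := by
      rcases Set.eq_empty_or_nonempty Btil with hBe | hBne
      · rw [hNtil, hBe]; simp
      · have hanB : MeasureTheory.AnalyticSet Btil := hmB.analyticSet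
        rw [MeasureTheory.analyticSet_iff_exists_polishSpace_range] at hanB
        obtain ⟨β, tβ, pβ, g, hgc, hgr⟩ := hanB
        haveI : Nonempty β := by
          rcases hBne with ⟨q, hq⟩
          rw [← hgr] at hq
          exact ⟨hq.choose⟩
        obtain ⟨u, huc, hus⟩ := PolishSpace.exists_nat_nat_continuous_surjective β
        set f0 : NNaux → NNaux × (X × X) := g ∘ u with hf0
        have hf0c : Continuous f0 := hgc.comp huc
        have hf0r : Set.range f0 = Btil := by
          rw [← hgr, hf0, Set.range_comp, hus.range_eq, Set.image_univ]
        have hrange : Set.range (Prod.fst ∘ f0) = Ntil := by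
          rw [Set.range_comp, hf0r]
        refine le_antisymm ?_ (zero_le)
        refine ENNReal.le_of_forall_pos_le_add fun ε hε _ => ?_
        obtain ⟨L, hLc, hLle⟩ := aux_capa μ (Prod.fst ∘ f0) (continuous_fst.comp hf0c)
          (by exact_mod_cast hε : (0 : ℝ≥0∞) < (ε : ℝ≥0∞))
        rw [hrange] at hLle
        set C : Set (NNaux × (X × X)) := f0 '' L with hC
        have hCc : IsCompact C := hLc.image hf0c
        have hCB : C ⊆ Btil := by
          rw [← hf0r]; exact Set.image_subset_range _ _
        set C' : Set (NNaux × X) := (fun q : NNaux × (X × X) => (q.1, q.2.1 + q.2.2)) '' C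
          with hC'
        have hC'c : IsCompact C' :=
          hCc.image (continuous_fst.prodMk (continuous_snd.fst.add continuous_snd.snd))
        have hC'm : MeasurableSet C' := hC'c.isClosed.measurableSet
        set D : Set NNaux := Prod.fst '' C with hD
        have hDc : IsCompact D := hCc.image continuous_fst
        have hDm : MeasurableSet D := hDc.isClosed.measurableSet
        have hDL : D = (Prod.fst ∘ f0) '' L := by
          rw [hD, hC, ← Set.image_comp]
        set W : Ω → Set X := fun ω => {v | (φ ω, v) ∈ C'} with hW
        have hWg : MeasurableSet[mH.prod (inferInstance : MeasurableSpace X)]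
            {p : Ω × X | p.2 ∈ W p.1} := by
          have hb : {p : Ω × X | p.2 ∈ W p.1} = (fun p : Ω × X => (φ p.1, p.2)) ⁻¹' C' := rfl
          rw [hb]
          exact measurable_pairmap hφ hC'm
        have hWsub : ∀ᵐ ω ∂P, W ω ⊆ CX ω + CY ω := by
          filter_upwards [hZXsub, hZYsub] with ω h1 h2
          intro v hv
          obtain ⟨q, hqC, hq⟩ := hv
          obtain ⟨hB1, hB2, -⟩ := hCB hqC
          have hk : q.1 = φ ω := congrArg Prod.fst hq
          have hv' : q.2.1 + q.2.2 = v := congrArg Prod.snd hq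
          rw [hk] at hB1 hB2
          rw [← hv']
          exact Set.add_mem_add (h1 ((c1 ω q.2.1).2 hB1)) (h2 ((c2 ω q.2.2).2 hB2))
        have hWZS := hmax W hWg hWsub
        have hae : ∀ᵐ ω ∂P, ω ∉ φ ⁻¹' D := by
          filter_upwards [hWZS] with ω hω
          intro hφD
          obtain ⟨q, hqC, hq1⟩ := hφD
          have hv : q.2.1 + q.2.2 ∈ W ω := ⟨q, hqC, by dsimp only; rw [hq1]⟩
          have hq3 := (hCB hqC).2.2
          rw [hq1] at hq3
          exact hq3 ((c3 ω _).1 (hω hv))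
        have hPD : P (φ ⁻¹' D) = 0 := by
          rw [← MeasureTheory.measure_eq_zero_iff_ae_notMem] at hae
          exact hae
        have hμD : μ D = 0 := by
          rw [hμ, MeasureTheory.Measure.map_apply hφF hDm]
          exact hPD
        calc μ Ntil ≤ μ ((Prod.fst ∘ f0) '' L) + ε := hLle
          _ = μ D + ε := by rw [hDL]
          _ = 0 + ε := by rw [hμD]
    set H : Set NNaux := toMeasurable μ Ntil with hH'
    have hHm : MeasurableSet H := measurableSet_toMeasurable _ _
    have hPH : P (φ ⁻¹' H) = 0 := by
      rw [← MeasureTheory.Measure.map_apply hφF hHm, ← hμ, hH', measure_toMeasurable]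
      exact hnull
    have hae2 : ∀ᵐ ω ∂P, ω ∉ φ ⁻¹' H := MeasureTheory.measure_eq_zero_iff_ae_notMem.mp hPH
    filter_upwards [hae2] with ω hω
    intro v hv
    rw [Set.mem_add] at hv
    obtain ⟨a, ha, b, hb, rfl⟩ := hv
    by_contra hnot
    have hB : (φ ω, (a, b)) ∈ Btil :=
      ⟨(c1 ω a).1 ha, (c2 ω b).1 hb, fun hc => hnot ((c3 ω _).2 hc)⟩
    exact hω (subset_toMeasurable _ _ ⟨(φ ω, (a, b)), hB, rfl⟩)
  · -- Part 2 : translation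
    intro C _ _ η hη Z ZS hZ hZS
    letI mFinst : MeasurableSpace Ω := mF
    obtain ⟨hZg, hZsub, hZmax⟩ := hZ
    obtain ⟨hSg, hSsub, hSmax⟩ := hZS
    -- forward inclusion  Z + {η} ⊆ ZS
    set W1 : Ω → Set X := fun ω => Z ω + {η ω} with hW1
    have hW1g : MeasurableSet[mH.prod (inferInstance : MeasurableSpace X)]
        {p : Ω × X | p.2 ∈ W1 p.1} := by
      have hb : {p : Ω × X | p.2 ∈ W1 p.1} =
          (fun p : Ω × X => (p.1, p.2 - η p.1)) ⁻¹' {p : Ω × X | p.2 ∈ Z p.1} := by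
        ext p
        simp only [Set.mem_setOf_eq, Set.mem_preimage, hW1, memadd]
      rw [hb]
      have hψ : @Measurable (Ω × X) (Ω × X) (mH.prod (inferInstance : MeasurableSpace X))
          (mH.prod (inferInstance : MeasurableSpace X)) (fun p => (p.1, p.2 - η p.1)) := by
        refine Measurable.prodMk measurable_fst ?_
        exact measurable_snd.sub (hη.comp measurable_fst)
      exact hψ hZg
    have hW1sub : ∀ᵐ ω ∂P, W1 ω ⊆ C ω + {η ω} := by
      filter_upwards [hZsub] with ω h
      intro v hv
      rw [hW1] at hv
      rw [memadd] at hv ⊢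
      exact h hv
    have hdir1 := hSmax W1 hW1g hW1sub
    -- backward inclusion ZS ⊆ Z + {η}
    set W2 : Ω → Set X := fun ω => ZS ω + {-η ω} with hW2
    have hW2g : MeasurableSet[mH.prod (inferInstance : MeasurableSpace X)]
        {p : Ω × X | p.2 ∈ W2 p.1} := by
      have hb : {p : Ω × X | p.2 ∈ W2 p.1} =
          (fun p : Ω × X => (p.1, p.2 + η p.1)) ⁻¹' {p : Ω × X | p.2 ∈ ZS p.1} := by
        ext p
        simp only [Set.mem_setOf_eq, Set.mem_preimage, hW2, memadd, sub_neg_eq_add]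
      rw [hb]
      have hψ : @Measurable (Ω × X) (Ω × X) (mH.prod (inferInstance : MeasurableSpace X))
          (mH.prod (inferInstance : MeasurableSpace X)) (fun p => (p.1, p.2 + η p.1)) := by
        refine Measurable.prodMk measurable_fst ?_
        exact measurable_snd.add (hη.comp measurable_fst)
      exact hψ hSg
    have hW2sub : ∀ᵐ ω ∂P, W2 ω ⊆ C ω := by
      filter_upwards [hSsub] with ω h
      intro v hv
      rw [hW2, memadd, sub_neg_eq_add] at hv
      have := h hv
      rw [memadd] at this
      simpa using this
    have hdir2 := hZmax W2 hW2g hW2sub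
    filter_upwards [hdir1, hdir2] with ω h1 h2
    refine subset_antisymm ?_ h1
    intro v hv
    rw [memadd]
    apply h2
    rw [hW2, memadd, sub_neg_eq_add, sub_add_cancel]
    exact hv
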